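/- In a uniform rooted Cayley tree on n labeled vertices, the distance between two independent uniformly chosen distinct vertices equals h with probability ((h+1)/(n-1)) · (n(n-1)···(n-h))/n^{h+1}, for 1 ≤ h ≤ n-1. -/

import Mathlib

open Finset Function
section IDENT
lemma nat_card_sigma' {ι : Type*} [Fintype ι] (F : ι → Type*) [∀ i, Finite (F i)] :
    Nat.card (Σ i, F i) = ∑ i : ι, Nat.card (F i) := by
  classical
  letI : ∀ i, Fintype (F i) := fun i => Fintype.ofFinite _
  rw [Nat.card_eq_fintype_card, Fintype.card_sigma]
  exact Finset.sum_congr rfl fun i _ => (Nat.card_eq_fintype_card).symm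

lemma sum_deriv_binom (M k : ℕ) (hM : 1 ≤ M) :
    ∑ j ∈ Finset.range (M+1), M.choose j * (k^j * (j * M^(M-j)))
      = k * M * (k+M)^(M-1) := by
  rw [Finset.sum_range_succ']
  simp only [Nat.zero_eq, mul_zero, zero_mul, add_zero, pow_zero]
  have key : ∀ i ∈ Finset.range M,
      M.choose (i+1) * (k^(i+1) * ((i+1) * M^(M-(i+1))))
        = (k * M) * ((M-1).choose i * (k^i * M^((M-1)-i))) := by
    intro i hi
    rw [Finset.mem_range] at hi
    have h1 : M.choose (i+1) * (i+1) = M * (M-1).choose i := by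
      have := Nat.add_one_mul_choose_eq (M-1) i
      rw [Nat.sub_add_cancel hM] at this
      omega
    have h2 : M - (i+1) = (M-1) - i := by omega
    rw [h2]
    calc M.choose (i+1) * (k^(i+1) * ((i+1) * M^((M-1)-i)))
        = (M.choose (i+1) * (i+1)) * (k^(i+1) * M^((M-1)-i)) := by ring
      _ = (M * (M-1).choose i) * (k^(i+1) * M^((M-1)-i)) := by rw [h1]
      _ = (k * M) * ((M-1).choose i * (k^i * M^((M-1)-i))) := by ring
  rw [Finset.sum_congr rfl key, ← Finset.mul_sum]
  congr 1
  rw [add_pow k M (M-1), show M - 1 + 1 = M by omega]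
  exact Finset.sum_congr rfl fun i hi => by push_cast; ring
end IDENT

variable {V : Type} [Fintype V] [DecidableEq V]

def IsForestFn (R : Finset V) (g : V → V) : Prop :=
  (∀ r ∈ R, g r = r) ∧ ∀ v, ∃ d, g^[d] v ∈ R

def forestA (R A : Finset V) : Finset {v // v ∈ Rᶜ} :=
  Finset.univ.filter (fun s => s.1 ∈ A)

lemma mem_forestA {R A : Finset V} {s : {v // v ∈ Rᶜ}} : s ∈ forestA R A ↔ s.1 ∈ A := by
  simp [forestA]

lemma card_forestA {R A : Finset V} (hA : A ⊆ Rᶜ) : (forestA R A).card = A.card := by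
  apply Finset.card_bij (fun s _ => s.1)
  · intro s hs; exact mem_forestA.mp hs
  · intro s _ t _ h; exact Subtype.ext h
  · intro a ha; exact ⟨⟨a, hA ha⟩, mem_forestA.mpr ha, rfl⟩

section maps

variable (R A : Finset V)

def hstep (g : V → V) (hg : ∀ s : {v // v ∈ Rᶜ}, s.1 ∉ A → g s.1 ∈ Rᶜ) :
    {v // v ∈ Rᶜ} → {v // v ∈ Rᶜ} :=
  fun s => if h : s.1 ∈ A then s else ⟨g s.1, hg s h⟩

def gluefun (φ : {a // a ∈ A} → {r // r ∈ R}) (h : {v // v ∈ Rᶜ} → {v // v ∈ Rᶜ}) :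
    V → V :=
  fun v => if hv : v ∈ Rᶜ then (if hA : v ∈ A then (φ ⟨v, hA⟩).1 else (h ⟨v, hv⟩).1) else v

variable {R A}

lemma hstep_pos {g : V → V} {hg} {s : {v // v ∈ Rᶜ}} (hs : s.1 ∈ A) :
    hstep R A g hg s = s := dif_pos hs

lemma hstep_neg {g : V → V} {hg} {s : {v // v ∈ Rᶜ}} (hs : s.1 ∉ A) :
    hstep R A g hg s = ⟨g s.1, hg s hs⟩ := dif_neg hs

lemma gluefun_of_mem_R {φ : {a // a ∈ A} → {r // r ∈ R}} {h} {v : V} (hv : v ∈ R) :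
    gluefun R A φ h v = v :=
  dif_neg (by rw [Finset.mem_compl]; exact fun hc => hc hv)

lemma gluefun_of_mem_A (hA : A ⊆ Rᶜ) {φ : {a // a ∈ A} → {r // r ∈ R}} {h} {v : V}
    (hv : v ∈ A) : gluefun R A φ h v = (φ ⟨v, hv⟩).1 := by
  rw [gluefun, dif_pos (hA hv), dif_pos hv]

lemma gluefun_of_other {φ : {a // a ∈ A} → {r // r ∈ R}} {h} {v : V} (hv : v ∈ Rᶜ)
    (hvA : v ∉ A) : gluefun R A φ h v = (h ⟨v, hv⟩).1 := by
  rw [gluefun, dif_pos hv, dif_neg hvA]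

lemma hstep_iter {g : V → V} {hg} (hArel : ∀ v ∈ A, g v ∈ R) (s : {v // v ∈ Rᶜ}) :
    ∀ j : ℕ, (∀ i < j, g^[i+1] s.1 ∉ R) → ((hstep R A g hg)^[j] s).1 = g^[j] s.1 := by
  intro j
  induction j with
  | zero => intro _; rfl
  | succ j ih =>
    intro hj
    have hval : ((hstep R A g hg)^[j] s).1 = g^[j] s.1 :=
      ih (fun i hi => hj i (by omega))
    rw [iterate_succ_apply', iterate_succ_apply']
    set x := (hstep R A g hg)^[j] s with hx
    have hxA : x.1 ∉ A := by
      intro hmem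
      apply hj j (by omega)
      have : g^[j+1] s.1 = g x.1 := by rw [iterate_succ_apply', hval]
      rw [this]
      exact hArel _ hmem
    rw [hstep_neg hxA]
    exact congrArg g hval

lemma gluefun_iter {φ : {a // a ∈ A} → {r // r ∈ R}} {h : {v // v ∈ Rᶜ} → {v // v ∈ Rᶜ}}
    {v : V} (hv : v ∈ Rᶜ) :
    ∀ j : ℕ, (∀ i < j, (h^[i] ⟨v, hv⟩).1 ∉ A) →
      (gluefun R A φ h)^[j] v = (h^[j] ⟨v, hv⟩).1 := by
  intro j
  induction j with
  | zero => intro _; rfl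
  | succ j ih =>
    intro hj
    have hval : (gluefun R A φ h)^[j] v = (h^[j] ⟨v, hv⟩).1 :=
      ih (fun i hi => hj i (by omega))
    rw [iterate_succ_apply', iterate_succ_apply', hval]
    set x := h^[j] ⟨v, hv⟩ with hx
    rw [gluefun_of_other x.2 (hj j (by omega))]

-- components of the forward map
lemma toFun_hArel {g : V → V} (hΦ : Rᶜ.filter (fun v => g v ∈ R) = A) :
    ∀ v ∈ A, g v ∈ R := by
  intro v hv
  rw [← hΦ] at hv
  exact (Finset.mem_filter.mp hv).2

lemma toFun_hg {g : V → V} (hΦ : Rᶜ.filter (fun v => g v ∈ R) = A) :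
    ∀ s : {v // v ∈ Rᶜ}, s.1 ∉ A → g s.1 ∈ Rᶜ := by
  intro s hs
  rw [Finset.mem_compl]
  intro hgR
  exact hs (by rw [← hΦ]; exact Finset.mem_filter.mpr ⟨s.2, hgR⟩)

open scoped Classical in
lemma hstep_forest {g : V → V} (hreach : ∀ v, ∃ d, g^[d] v ∈ R)
    (hΦ : Rᶜ.filter (fun v => g v ∈ R) = A) :
    IsForestFn (forestA R A) (hstep R A g (toFun_hg hΦ)) := by
  constructor
  · intro a ha
    exact hstep_pos (mem_forestA.mp ha)
  · intro s
    have hd := hreach s.1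
    have hds : g^[Nat.find hd] s.1 ∈ R := Nat.find_spec hd
    have hd1 : 1 ≤ Nat.find hd := by
      apply Nat.pos_of_ne_zero
      intro h0
      rw [h0] at hds
      exact Finset.mem_compl.mp s.2 (by simpa using hds)
    refine ⟨Nat.find hd - 1, ?_⟩
    have hiter := hstep_iter (hg := toFun_hg hΦ) (toFun_hArel hΦ) s (Nat.find hd - 1)
      (fun i hi => Nat.find_min hd (by omega))
    rw [mem_forestA, hiter, ← hΦ, Finset.mem_filter]
    refine ⟨Finset.mem_compl.mpr (Nat.find_min hd (by omega)), ?_⟩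
    have h2 : Nat.find hd - 1 + 1 = Nat.find hd := by omega
    have h3 : g (g^[Nat.find hd - 1] s.1) = g^[Nat.find hd] s.1 := by
      rw [← h2]
      exact (iterate_succ_apply' g _ _).symm
    rw [h3]
    exact hds

open scoped Classical in
lemma gluefun_forest {φ : {a // a ∈ A} → {r // r ∈ R}}
    {h : {v // v ∈ Rᶜ} → {v // v ∈ Rᶜ}} (hA : A ⊆ Rᶜ)
    (hreach' : ∀ s, ∃ d, h^[d] s ∈ forestA R A) :
    IsForestFn R (gluefun R A φ h) := by
  constructor
  · intro r hr
    exact gluefun_of_mem_R hr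
  · intro v
    by_cases hv : v ∈ Rᶜ
    · have hd := hreach' ⟨v, hv⟩
      have hds : h^[Nat.find hd] ⟨v, hv⟩ ∈ forestA R A := Nat.find_spec hd
      have hiter := gluefun_iter (φ := φ) hv (Nat.find hd)
        (fun i hi hc => Nat.find_min hd hi (mem_forestA.mpr hc))
      refine ⟨Nat.find hd + 1, ?_⟩
      rw [iterate_succ_apply', hiter,
        gluefun_of_mem_A hA (mem_forestA.mp hds)]
      exact (φ _).2
    · exact ⟨0, by rwa [Finset.mem_compl, not_not] at hv⟩

lemma gluefun_filter {φ : {a // a ∈ A} → {r // r ∈ R}}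
    {h : {v // v ∈ Rᶜ} → {v // v ∈ Rᶜ}} (hA : A ⊆ Rᶜ) :
    Rᶜ.filter (fun v => gluefun R A φ h v ∈ R) = A := by
  ext w
  simp only [Finset.mem_filter]
  constructor
  · rintro ⟨hw, hgw⟩
    by_cases hwA : w ∈ A
    · exact hwA
    · rw [gluefun_of_other hw hwA] at hgw
      exact absurd hgw (Finset.mem_compl.mp (h ⟨w, hw⟩).2)
  · intro hwA
    refine ⟨hA hwA, ?_⟩
    rw [gluefun_of_mem_A hA hwA]
    exact (φ _).2

end maps

open scoped Classical in
noncomputable def fiberEquiv (R A : Finset V) (hA : A ⊆ Rᶜ) :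
    {x : {g : V → V // IsForestFn R g} // Rᶜ.filter (fun v => x.1 v ∈ R) = A}
      ≃ ({a // a ∈ A} → {r // r ∈ R}) ×
        {h : {v // v ∈ Rᶜ} → {v // v ∈ Rᶜ} // IsForestFn (forestA R A) h} where
  toFun := fun ⟨⟨g, hg⟩, hΦ⟩ =>
    ⟨fun a => ⟨g a.1, toFun_hArel hΦ a.1 a.2⟩,
     ⟨hstep R A g (toFun_hg hΦ), hstep_forest hg.2 hΦ⟩⟩
  invFun p :=
    ⟨⟨gluefun R A p.1 p.2.1,
      gluefun_forest hA p.2.2.2⟩, gluefun_filter hA⟩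
  left_inv := by
    rintro ⟨⟨g, hfix, hreach⟩, hΦ⟩
    apply Subtype.ext
    apply Subtype.ext
    funext v
    simp only
    by_cases hv : v ∈ Rᶜ
    · by_cases hvA : v ∈ A
      · rw [gluefun_of_mem_A hA hvA]
      · rw [gluefun_of_other hv hvA, hstep_neg hvA]
    · rw [gluefun_of_mem_R (by rwa [Finset.mem_compl, not_not] at hv)]
      exact (hfix v (by rwa [Finset.mem_compl, not_not] at hv)).symm
  right_inv := by
    rintro ⟨φ, h, hfix', hreach'⟩
    refine Prod.ext ?_ ?_
    · funext a
      apply Subtype.ext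
      simp only
      rw [gluefun_of_mem_A hA a.2]
    · apply Subtype.ext
      funext s
      simp only
      by_cases hsA : s.1 ∈ A
      · rw [hstep_pos hsA]
        exact (hfix' s (mem_forestA.mpr hsA)).symm
      · rw [hstep_neg hsA]
        apply Subtype.ext
        simp only
        rw [gluefun_of_other s.2 hsA]

theorem forestFn_card :
    ∀ (m : ℕ) (V : Type) [Fintype V] [DecidableEq V] (R : Finset V), R.Nonempty →
      Fintype.card V - R.card = m →
      Nat.card {g : V → V // IsForestFn R g} * Fintype.card V
        = R.card * Fintype.card V ^ (Fintype.card V - R.card) := by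
  intro m
  induction m using Nat.strong_induction_on with
  | _ m IH =>
    intro V _ _ R hR hm
    classical
    rcases Nat.eq_zero_or_pos m with h0 | hpos
    · -- base case : R = univ
      subst h0
      have hcard : R.card = Fintype.card V :=
        le_antisymm R.card_le_univ (by omega)
      have hRuniv : R = Finset.univ := Finset.eq_univ_of_card R hcard
      have h1 : Nat.card {g : V → V // IsForestFn R g} = 1 := by
        rw [Nat.card_eq_one_iff_unique]
        constructor
        · constructor
          intro g g'
          apply Subtype.ext; funext v
          rw [g.2.1 v (hRuniv ▸ Finset.mem_univ v), g'.2.1 v (hRuniv ▸ Finset.mem_univ v)]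
        · exact ⟨⟨id, fun r _ => rfl, fun v => ⟨0, hRuniv ▸ Finset.mem_univ v⟩⟩⟩
      rw [h1, hm, hcard]
      ring
    · -- inductive step
      have hS : Rᶜ.card = m := by rw [Finset.card_compl]; omega
      set k := R.card with hk
      set N := Nat.card {g : V → V // IsForestFn R g} with hN
      set fib : Finset V → ℕ := fun A =>
        Nat.card {x : {g : V → V // IsForestFn R g} // Rᶜ.filter (fun v => x.1 v ∈ R) = A}
        with hfib
      have step1 : N = ∑ A : Finset V, fib A := by
        rw [hN, Nat.card_congr
          (Equiv.sigmaFiberEquiv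
            (fun x : {g : V → V // IsForestFn R g} =>
              Rᶜ.filter (fun v => x.1 v ∈ R))).symm]
        exact nat_card_sigma' _
      set P := Rᶜ.powerset.filter (fun A => A.Nonempty) with hP
      have hPsub : P ⊆ Finset.univ := Finset.subset_univ _
      have zero_out : ∀ A ∈ Finset.univ, A ∉ P → fib A = 0 := by
        intro A _ hA
        have hcases : ¬(A ⊆ Rᶜ) ∨ A = ∅ := by
          rw [hP, Finset.mem_filter, Finset.mem_powerset] at hA
          by_cases h : A ⊆ Rᶜ
          · right
            rw [← Finset.not_nonempty_iff_eq_empty]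
            exact fun hne => hA ⟨h, hne⟩
          · left; exact h
        have : IsEmpty {x : {g : V → V // IsForestFn R g} //
            Rᶜ.filter (fun v => x.1 v ∈ R) = A} := by
          constructor
          rintro ⟨⟨g, hfix, hreach⟩, hΦ⟩
          simp only at hΦ
          rcases hcases with hc | hc
          · exact hc (hΦ ▸ Finset.filter_subset _ _)
          · obtain ⟨s, hs⟩ := Finset.card_pos.mp (hS ▸ hpos)
            have hd := hreach s
            have hds : g^[Nat.find hd] s ∈ R := Nat.find_spec hd
            have hd1 : 1 ≤ Nat.find hd := by
              apply Nat.pos_of_ne_zero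
              intro h0
              rw [h0] at hds
              exact Finset.mem_compl.mp hs (by simpa using hds)
            have hw : g^[Nat.find hd - 1] s ∈ Rᶜ.filter (fun v => g v ∈ R) := by
              refine Finset.mem_filter.mpr ⟨Finset.mem_compl.mpr (Nat.find_min hd (by omega)), ?_⟩
              have h2 : Nat.find hd - 1 + 1 = Nat.find hd := by omega
              have h3 : g (g^[Nat.find hd - 1] s) = g^[Nat.find hd] s := by
                rw [← h2]
                exact (iterate_succ_apply' g _ _).symm
              rw [h3]
              exact hds
            rw [hΦ, hc] at hw
            exact absurd hw (Finset.notMem_empty _)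
        exact Nat.card_of_isEmpty
      have step3 : ∀ A ∈ P, fib A * m = k ^ A.card * (A.card * m ^ (m - A.card)) := by
        intro A hA
        rw [hP, Finset.mem_filter, Finset.mem_powerset] at hA
        obtain ⟨hAsub, hAne⟩ := hA
        have hj1 : 1 ≤ A.card := Finset.card_pos.mpr hAne
        have hjm : A.card ≤ m := hS ▸ Finset.card_le_card hAsub
        have hcompl : Fintype.card {v // v ∈ Rᶜ} = m := by
          rw [Fintype.card_coe]; exact hS
        have hA'card : (forestA R A).card = A.card := card_forestA hAsub
        have hA'ne : (forestA R A).Nonempty := by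
          obtain ⟨a, ha⟩ := hAne
          exact ⟨⟨a, hAsub ha⟩, mem_forestA.mpr ha⟩
        have ih := IH (m - A.card) (by omega) {v // v ∈ Rᶜ} (forestA R A) hA'ne
          (by rw [hcompl, hA'card])
        rw [hcompl, hA'card] at ih
        have hfibA : fib A = k ^ A.card *
            Nat.card {h : {v // v ∈ Rᶜ} → {v // v ∈ Rᶜ} // IsForestFn (forestA R A) h} := by
          rw [hfib]
          dsimp only
          rw [Nat.card_congr (fiberEquiv R A hAsub), Nat.card_prod]
          congr 1
          rw [Nat.card_eq_fintype_card, Fintype.card_fun, Fintype.card_coe, Fintype.card_coe]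
        rw [hfibA, mul_assoc, ih]
      -- assemble
      have step4 : N * m = k * m * (k + m) ^ (m - 1) := by
        rw [step1, ← Finset.sum_subset hPsub zero_out, Finset.sum_mul]
        rw [Finset.sum_congr rfl step3]
        have ext2 : ∑ A ∈ P, k ^ A.card * (A.card * m ^ (m - A.card))
            = ∑ A ∈ Rᶜ.powerset, k ^ A.card * (A.card * m ^ (m - A.card)) := by
          apply Finset.sum_subset
          · rw [hP]; exact Finset.filter_subset _ _
          · intro A hA hAP
            have : A = ∅ := by
              rw [hP, Finset.mem_filter] at hAP
              rw [← Finset.not_nonempty_iff_eq_empty]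
              exact fun hne => hAP ⟨hA, hne⟩
            rw [this]
            simp
        rw [ext2]
        rw [Finset.sum_powerset Rᶜ (fun A => k ^ A.card * (A.card * m ^ (m - A.card)))]
        have inner : ∀ j ∈ Finset.range (Rᶜ.card + 1),
            ∑ t ∈ Finset.powersetCard j Rᶜ, k ^ t.card * (t.card * m ^ (m - t.card))
              = Rᶜ.card.choose j * (k ^ j * (j * m ^ (m - j))) := by
          intro j _
          rw [Finset.sum_powersetCard j Rᶜ (fun i => k ^ i * (i * m ^ (m - i)))]
          rw [smul_eq_mul]
        rw [Finset.sum_congr rfl inner, hS, sum_deriv_binom m k hpos]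
      have hn : k + m = Fintype.card V := by
        have := R.card_add_card_compl
        omega
      have Neq : N = k * (k + m) ^ (m - 1) := by
        apply Nat.eq_of_mul_eq_mul_right hpos
        rw [step4]
        ring
      rw [← hn, Nat.add_sub_cancel_left, Neq, mul_assoc, ← pow_succ,
        show m - 1 + 1 = m by omega]

open SimpleGraph Walk

variable {V : Type} [Fintype V] [DecidableEq V]

def IsTreeFn (u : V) (f : V → V) : Prop := f u = u ∧ ∀ v, ∃ d, f^[d] v = u

def treeGraph (u : V) (f : V → V) : SimpleGraph V :=
  SimpleGraph.fromRel (fun a b => a ≠ u ∧ f a = b)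

open scoped Classical in
noncomputable def dep {u : V} {f : V → V} (hf : IsTreeFn u f) (v : V) : ℕ :=
  Nat.find (hf.2 v)

section treeFnToGraph

variable {u : V} {f : V → V} (hf : IsTreeFn u f)
include hf
set_option linter.unusedSectionVars false

lemma dep_spec (v : V) : f^[dep hf v] v = u := by
  classical
  exact Nat.find_spec (hf.2 v)

lemma dep_eq_zero_iff {v : V} : dep hf v = 0 ↔ v = u := by
  classical
  constructor
  · intro h
    have := dep_spec hf v
    rwa [h] at this
  · intro h
    subst h
    have : f^[0] v = v := rfl
    simp only [dep]
    rw [Nat.find_eq_zero]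
    rfl

lemma dep_pos {v : V} (hv : v ≠ u) : 1 ≤ dep hf v := by
  rcases Nat.eq_zero_or_pos (dep hf v) with h0 | h1
  · exact absurd ((dep_eq_zero_iff hf).mp h0) hv
  · exact h1

lemma dep_step {v : V} (hv : v ≠ u) : dep hf (f v) + 1 = dep hf v := by
  classical
  have h1 : 1 ≤ dep hf v := dep_pos hf hv
  have hle : dep hf (f v) ≤ dep hf v - 1 := by
    apply Nat.find_le
    have : f^[dep hf v - 1] (f v) = f^[dep hf v - 1 + 1] v := by
      rw [iterate_succ_apply]
    rw [this, Nat.sub_add_cancel h1]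
    exact dep_spec hf v
  have hge : dep hf v ≤ dep hf (f v) + 1 := by
    apply Nat.find_le
    rw [iterate_succ_apply]
    exact dep_spec hf (f v)
  omega

lemma f_ne_self {v : V} (hv : v ≠ u) : f v ≠ v := by
  intro hfv
  have : ∀ d, f^[d] v = v := by
    intro d
    induction d with
    | zero => rfl
    | succ d ih => rw [iterate_succ_apply', ih, hfv]
  obtain ⟨d, hd⟩ := hf.2 v
  rw [this d] at hd
  exact hv hd

lemma adj_parent {v : V} (hv : v ≠ u) : (treeGraph u f).Adj v (f v) := by
  rw [treeGraph, fromRel_adj]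
  exact ⟨(f_ne_self hf hv).symm, Or.inl ⟨hv, rfl⟩⟩

lemma adj_cases {a b : V} (hab : (treeGraph u f).Adj a b) :
    (dep hf a = dep hf b + 1 ∧ f a = b) ∨ (dep hf b = dep hf a + 1 ∧ f b = a) := by
  rw [treeGraph, fromRel_adj] at hab
  obtain ⟨hne, hc | hc⟩ := hab
  · left
    exact ⟨by rw [← hc.2, dep_step hf hc.1], hc.2⟩
  · right
    exact ⟨by rw [← hc.2, dep_step hf hc.1], hc.2⟩

lemma exists_walk_dep (v : V) : ∃ p : (treeGraph u f).Walk v u, p.length = dep hf v := by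
  generalize hd : dep hf v = d
  induction d generalizing v with
  | zero =>
    have : v = u := (dep_eq_zero_iff hf).mp hd
    subst this
    exact ⟨Walk.nil, rfl⟩
  | succ d ih =>
    have hv : v ≠ u := by
      intro h
      subst h
      rw [(dep_eq_zero_iff hf).mpr rfl] at hd
      omega
    have hstep := dep_step hf hv
    obtain ⟨p, hp⟩ := ih (f v) (by omega)
    exact ⟨Walk.cons (adj_parent hf hv) p, by simp [hp]⟩

lemma dep_le_length' : ∀ {a b : V} (p : (treeGraph u f).Walk a b), b = u → dep hf a ≤ p.length := by
  intro a b p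
  induction p with
  | nil =>
    rintro rfl
    rw [(dep_eq_zero_iff hf).mpr rfl]
    exact Nat.zero_le _
  | cons hadj q ih =>
    intro hb
    have := ih hb
    rcases adj_cases hf hadj with ⟨h1, _⟩ | ⟨h1, _⟩ <;> simp only [Walk.length_cons] <;> omega

lemma dep_le_length {a : V} (p : (treeGraph u f).Walk a u) : dep hf a ≤ p.length :=
  dep_le_length' hf p rfl

lemma treeGraph_connected : (treeGraph u f).Connected := by
  rw [connected_iff]
  refine ⟨?_, ⟨u⟩⟩
  intro a b
  obtain ⟨p, _⟩ := exists_walk_dep hf a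
  obtain ⟨q, _⟩ := exists_walk_dep hf b
  exact p.reachable.trans q.reachable.symm

lemma treeGraph_dist (v : V) : (treeGraph u f).dist v u = dep hf v := by
  apply le_antisymm
  · obtain ⟨p, hp⟩ := exists_walk_dep hf v
    exact hp ▸ SimpleGraph.dist_le p
  · obtain ⟨p, hp⟩ := (treeGraph_connected hf).exists_walk_length_eq_dist v u
    exact hp ▸ dep_le_length hf p

lemma treeGraph_acyclic : (treeGraph u f).IsAcyclic := by
  intro a c hc
  -- pick a vertex of maximal depth on the cycle
  obtain ⟨m, hm, hmax⟩ := (c.support.toFinset).exists_max_image (dep hf)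
    ⟨a, List.mem_toFinset.mpr c.start_mem_support⟩
  rw [List.mem_toFinset] at hm
  have hmax' : ∀ z ∈ c.support, dep hf z ≤ dep hf m := by
    intro z hz
    exact hmax z (List.mem_toFinset.mpr hz)
  set c' := c.rotate m hm with hc'def
  have hc' : c'.IsCycle := hc.rotate hm
  have hsupp : ∀ z ∈ c'.support, dep hf z ≤ dep hf m := by
    intro z hz
    apply hmax'
    rw [Walk.support_eq_cons] at hz
    rcases List.mem_cons.mp hz with rfl | hz'
    · exact hm
    · exact List.mem_of_mem_tail ((Walk.support_rotate c m hm).mem_iff.mp hz')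
  clear_value c'
  cases c' with
  | nil => exact hc'.ne_nil rfl
  | @cons _ x _ hmx q =>
    obtain ⟨hqpath, hmx_ne⟩ := (Walk.cons_isCycle_iff q hmx).mp hc'
    have hq_len : 2 ≤ q.length := by
      have := hc'.three_le_length
      simp only [Walk.length_cons] at this
      omega
    cases hq' : q.reverse with
    | nil =>
      have h0 : q.length = 0 := by
        have := congrArg Walk.length hq'
        simpa using this
      omega
    | @cons _ y _ hmy q2 =>
      have hyedge : s(m, y) ∈ q.edges := by
        have h1 : s(m, y) ∈ q.reverse.edges := by
          rw [hq']
          simp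
        rwa [Walk.edges_reverse, List.mem_reverse] at h1
      have hysupp : y ∈ q.support := by
        have h1 : y ∈ q.reverse.support := by
          rw [hq', Walk.support_cons]
          exact List.mem_cons_of_mem _ q2.start_mem_support
        rwa [Walk.support_reverse, List.mem_reverse] at h1
      have hxy : x ≠ y := by
        rintro rfl
        exact hmx_ne hyedge
      have hx_le : dep hf x ≤ dep hf m := by
        apply hsupp
        rw [Walk.support_cons]
        exact List.mem_cons_of_mem _ q.start_mem_support
      have hy_le : dep hf y ≤ dep hf m := by
        apply hsupp
        rw [Walk.support_cons]
        exact List.mem_cons_of_mem _ hysupp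
      have hfmx : f m = x := by
        rcases adj_cases hf hmx with ⟨_, h⟩ | ⟨h1, _⟩
        · exact h
        · omega
      have hfmy : f m = y := by
        rcases adj_cases hf hmy with ⟨_, h⟩ | ⟨h1, _⟩
        · exact h
        · omega
      exact hxy (hfmx ▸ hfmy)

lemma treeGraph_isTree : (treeGraph u f).IsTree :=
  ⟨treeGraph_connected hf, treeGraph_acyclic hf⟩

end treeFnToGraph

section treeToFn
set_option linter.unusedSectionVars false

variable {T : SimpleGraph V} (hT : T.IsTree) (u : V)
include hT

noncomputable def wpath (v : V) : T.Walk v u := (hT.existsUnique_path v u).choose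

lemma wpath_isPath (v : V) : (wpath hT u v).IsPath :=
  (hT.existsUnique_path v u).choose_spec.1

lemma wpath_unique {v : V} (p : T.Walk v u) (hp : p.IsPath) : p = wpath hT u v :=
  (hT.existsUnique_path v u).choose_spec.2 p hp

noncomputable def parentMap : V → V :=
  fun v => if v = u then u else (wpath hT u v).getVert 1

lemma parentMap_u : parentMap hT u u = u := if_pos rfl

lemma length_wpath (v : V) : (wpath hT u v).length = T.dist v u := by
  apply le_antisymm
  · obtain ⟨p, hp⟩ := hT.1.exists_walk_length_eq_dist v u
    calc (wpath hT u v).length = p.bypass.length := by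
          rw [← wpath_unique hT u p.bypass p.bypass_isPath]
      _ ≤ p.length := Walk.length_bypass_le p
      _ = T.dist v u := hp
  · exact SimpleGraph.dist_le _

lemma wpath_cons {v : V} (hv : v ≠ u) :
    ∃ (w : V) (hadj : T.Adj v w) (q : T.Walk w u),
      wpath hT u v = Walk.cons hadj q ∧ q = wpath hT u w := by
  cases hp : wpath hT u v with
  | nil => exact absurd rfl hv
  | cons hadj q =>
    refine ⟨_, hadj, q, rfl, ?_⟩
    apply wpath_unique
    have := wpath_isPath hT u v
    rw [hp] at this
    exact this.of_cons

lemma parentMap_eq {v w : V} (hadj : T.Adj v w) (q : T.Walk w u)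
    (hpq : wpath hT u v = Walk.cons hadj q) (hv : v ≠ u) :
    parentMap hT u v = w := by
  rw [parentMap, if_neg hv, hpq, Walk.getVert_cons_succ, Walk.getVert_zero]

lemma parent_adj {v : V} (hv : v ≠ u) : T.Adj v (parentMap hT u v) := by
  obtain ⟨w, hadj, q, hpq, _⟩ := wpath_cons hT u hv
  rw [parentMap_eq hT u hadj q hpq hv]
  exact hadj

lemma parent_dist {v : V} (hv : v ≠ u) :
    T.dist (parentMap hT u v) u + 1 = T.dist v u := by
  obtain ⟨w, hadj, q, hpq, hq⟩ := wpath_cons hT u hv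
  rw [parentMap_eq hT u hadj q hpq hv]
  rw [← length_wpath hT, ← length_wpath hT, hpq, Walk.length_cons, ← hq]

lemma tdist_pos {v : V} (hv : v ≠ u) : 1 ≤ T.dist v u := by
  rcases Nat.eq_zero_or_pos (T.dist v u) with h0 | h1
  · exact absurd (hT.1.dist_eq_zero_iff.mp h0) hv
  · exact h1

lemma parent_iter_dist (v : V) :
    ∀ j, j ≤ T.dist v u → T.dist ((parentMap hT u)^[j] v) u = T.dist v u - j := by
  intro j
  induction j with
  | zero => intro _; simp
  | succ j ih =>
    intro hj
    have h1 : T.dist ((parentMap hT u)^[j] v) u = T.dist v u - j := ih (by omega)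
    have hne : (parentMap hT u)^[j] v ≠ u := by
      intro h
      rw [h, SimpleGraph.dist_self] at h1
      omega
    rw [iterate_succ_apply']
    have := parent_dist hT u hne
    omega

lemma parent_reach (v : V) : (parentMap hT u)^[T.dist v u] v = u := by
  have h1 := parent_iter_dist hT u v (T.dist v u) le_rfl
  simp only [Nat.sub_self] at h1
  by_contra hne
  have := tdist_pos hT u hne
  omega

lemma parent_min (v : V) {j : ℕ} (hj : j < T.dist v u) : (parentMap hT u)^[j] v ≠ u := by
  have h1 := parent_iter_dist hT u v j (by omega)
  intro h
  rw [h, SimpleGraph.dist_self] at h1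
  omega

lemma parentMap_isTreeFn : IsTreeFn u (parentMap hT u) :=
  ⟨parentMap_u hT u, fun v => ⟨T.dist v u, parent_reach hT u v⟩⟩

lemma wpath_drop_unique {a b : V} (hadj : T.Adj a b) (hb : b ∈ (wpath hT u a).support) :
    a ∉ (wpath hT u b).support := by
  intro ha
  have hq : (wpath hT u a).dropUntil b hb = wpath hT u b :=
    wpath_unique hT u _ ((wpath_isPath hT u a).dropUntil hb)
  have hnodup := (wpath_isPath hT u a).support_nodup
  rw [← Walk.take_spec (wpath hT u a) hb, Walk.support_append] at hnodup
  have hdisj := List.disjoint_of_nodup_append hnodup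
  have haL : a ∈ ((wpath hT u a).takeUntil b hb).support :=
    Walk.start_mem_support _
  have haR : a ∈ ((wpath hT u a).dropUntil b hb).support := by rw [hq]; exact ha
  rw [Walk.support_eq_cons] at haR
  rcases List.mem_cons.mp haR with rfl | haR'
  · exact hadj.ne rfl
  · exact hdisj haL haR'

lemma adj_of_not_mem_support {a b : V} (hadj : T.Adj a b)
    (hb : b ∉ (wpath hT u a).support) : parentMap hT u b = a ∧ b ≠ u := by
  have hbu : b ≠ u := by
    intro h
    exact hb (h ▸ (wpath hT u a).end_mem_support)
  have hpath : (Walk.cons hadj.symm (wpath hT u a)).IsPath :=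
    (Walk.cons_isPath_iff _ _).mpr ⟨wpath_isPath hT u a, hb⟩
  have huniq := wpath_unique hT u _ hpath
  exact ⟨parentMap_eq hT u hadj.symm (wpath hT u a) huniq.symm hbu, hbu⟩

lemma treeGraph_parentMap : treeGraph u (parentMap hT u) = T := by
  ext a b
  rw [treeGraph, fromRel_adj]
  constructor
  · rintro ⟨hne, ⟨hau, hfa⟩ | ⟨hbu, hfb⟩⟩
    · rw [← hfa]
      exact parent_adj hT u hau
    · rw [← hfb]
      exact (parent_adj hT u hbu).symm
  · intro hadj
    refine ⟨hadj.ne, ?_⟩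
    by_cases hb : b ∈ (wpath hT u a).support
    · have ha' := wpath_drop_unique hT u hadj hb
      obtain ⟨h1, h2⟩ := adj_of_not_mem_support hT u hadj.symm ha'
      exact Or.inl ⟨h2, h1⟩
    · obtain ⟨h1, h2⟩ := adj_of_not_mem_support hT u hadj hb
      exact Or.inr ⟨h2, h1⟩

end treeToFn

lemma parentMap_treeGraph {u : V} {f : V → V} (hf : IsTreeFn u f) :
    parentMap (treeGraph_isTree hf) u = f := by
  funext v
  by_cases hv : v = u
  · subst hv
    rw [parentMap_u, hf.1]
  · set hT' := treeGraph_isTree hf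
    have hadj := parent_adj hT' u hv
    have hdist := parent_dist hT' u hv
    rcases adj_cases hf hadj with ⟨h1, h2⟩ | ⟨h1, h2⟩
    · exact h2.symm
    · exfalso
      rw [treeGraph_dist hf, treeGraph_dist hf] at hdist
      omega

section Equivs

variable {V : Type} [Fintype V] [DecidableEq V]

open scoped Classical in
lemma dep_eq_of {u : V} {f : V → V} (hf : IsTreeFn u f) {v : V} {h : ℕ}
    (hit : f^[h] v = u) (hmin : ∀ j < h, f^[j] v ≠ u) : dep hf v = h := by
  apply le_antisymm
  · exact Nat.find_le hit
  · by_contra hlt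
    push_neg at hlt
    exact hmin _ hlt (dep_spec hf v)

/-- the intermediate type -/
def MType (V : Type) (h : ℕ) : Type :=
  {t : (V × V) × (V → V) // IsTreeFn t.1.1 t.2 ∧ t.2^[h] t.1.2 = t.1.1 ∧
    ∀ j < h, t.2^[j] t.1.2 ≠ t.1.1}

noncomputable def equivE1 (h : ℕ) (hh1 : 1 ≤ h) :
    {q : SimpleGraph V × V × V //
        q.1.IsTree ∧ q.2.1 ≠ q.2.2 ∧ q.1.dist q.2.1 q.2.2 = h} ≃ MType V h where
  toFun q :=
    ⟨((q.1.2.1, q.1.2.2), parentMap q.2.1 q.1.2.1),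
     parentMap_isTreeFn q.2.1 q.1.2.1, by
      have hd : q.1.1.dist q.1.2.2 q.1.2.1 = h := by
        rw [SimpleGraph.dist_comm]; exact q.2.2.2
      constructor
      · simp only
        have := parent_reach q.2.1 q.1.2.1 q.1.2.2
        rwa [hd] at this
      · intro j hj
        simp only
        exact parent_min q.2.1 q.1.2.1 q.1.2.2 (by omega)⟩
  invFun t :=
    ⟨(treeGraph t.1.1.1 t.1.2, t.1.1.1, t.1.1.2), treeGraph_isTree t.2.1, by
      have hvu : t.1.1.2 ≠ t.1.1.1 := t.2.2.2 0 hh1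
      exact hvu.symm, by
      simp only
      rw [SimpleGraph.dist_comm, treeGraph_dist t.2.1,
        dep_eq_of t.2.1 t.2.2.1 t.2.2.2]⟩
  left_inv := by
    rintro ⟨⟨T, u, v⟩, hT, hne, hdist⟩
    apply Subtype.ext
    simp only
    rw [treeGraph_parentMap hT u]
  right_inv := by
    rintro ⟨⟨⟨u, v⟩, f⟩, hf, hspec⟩
    apply Subtype.ext
    simp only
    rw [parentMap_treeGraph hf]

-- now the second equivalence
variable {h : ℕ}

def pnext (p : Fin (h+1) ↪ V) (i : Fin (h+1)) : V :=
  if hi : i.1 < h then p ⟨i.1 + 1, by omega⟩ else p i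

noncomputable def pstep (p : Fin (h+1) ↪ V) (g : V → V) : V → V :=
  fun w => if hw : ∃ i, p i = w then pnext p hw.choose else g w

lemma pstep_apply_p (p : Fin (h+1) ↪ V) (g : V → V) (i : Fin (h+1)) :
    pstep p g (p i) = pnext p i := by
  have hw : ∃ j, p j = p i := ⟨i, rfl⟩
  have hch : hw.choose = i := p.injective hw.choose_spec
  rw [pstep, dif_pos hw]
  exact congrArg (pnext p) hch

lemma pstep_p (p : Fin (h+1) ↪ V) (g : V → V) (i : Fin (h+1)) (hi : i.1 < h) :
    pstep p g (p i) = p ⟨i.1 + 1, by omega⟩ := by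
  rw [pstep_apply_p, pnext, dif_pos hi]

lemma pstep_last (p : Fin (h+1) ↪ V) (g : V → V) (i : Fin (h+1)) (hi : ¬ i.1 < h) :
    pstep p g (p i) = p i := by
  rw [pstep_apply_p, pnext, dif_neg hi]

lemma pstep_not (p : Fin (h+1) ↪ V) (g : V → V) {w : V} (hw : ¬∃ i, p i = w) :
    pstep p g w = g w := dif_neg hw

lemma mem_pR_iff {p : Fin (h+1) ↪ V} {w : V} :
    w ∈ Finset.univ.map p ↔ ∃ i, p i = w := by
  simp [Finset.mem_map]

lemma iter_agree {f g : V → V} {Rset : Finset V} (hfg : ∀ w ∉ Rset, g w = f w) (w : V) :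
    ∀ j : ℕ, (∀ i < j, f^[i] w ∉ Rset) → g^[j] w = f^[j] w := by
  intro j
  induction j with
  | zero => intro _; rfl
  | succ j ih =>
    intro hj
    have h1 : g^[j] w = f^[j] w := ih (fun i hi => hj i (by omega))
    rw [iterate_succ_apply', iterate_succ_apply', h1, hfg _ (hj j (by omega))]

lemma pstep_iter_p (p : Fin (h+1) ↪ V) (g : V → V) (i : Fin (h+1)) :
    ∀ (j : ℕ) (_ : i.1 + j ≤ h), (pstep p g)^[j] (p i) = p ⟨i.1 + j, by omega⟩ := by
  intro j
  induction j generalizing i with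
  | zero => intro _; simp
  | succ j ih =>
    intro hj
    rw [iterate_succ_apply, pstep_p p g i (by omega),
      ih ⟨i.1 + 1, by omega⟩ (by show i.1 + 1 + j ≤ h; omega)]
    congr 1
    rw [Fin.ext_iff]
    show i.1 + 1 + j = i.1 + (j + 1)
    omega

lemma pstep_isTreeFn (p : Fin (h+1) ↪ V) (g : V → V)
    (hg : IsForestFn (Finset.univ.map p) g) :
    IsTreeFn (p (Fin.last h)) (pstep p g) := by
  classical
  have hreach_p : ∀ i : Fin (h+1), ∃ d, (pstep p g)^[d] (p i) = p (Fin.last h) := by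
    intro i
    refine ⟨h - i.1, ?_⟩
    rw [pstep_iter_p p g i (h - i.1) (by omega)]
    congr 1
    rw [Fin.ext_iff]
    simp
    omega
  constructor
  · exact pstep_last p g (Fin.last h) (by simp)
  · intro w
    by_cases hw : ∃ i, p i = w
    · obtain ⟨i, rfl⟩ := hw
      exact hreach_p i
    · have hr : ∃ d, g^[d] w ∈ Finset.univ.map p := hg.2 w
      have hds : g^[Nat.find hr] w ∈ Finset.univ.map p := Nat.find_spec hr
      have hagree : (pstep p g)^[Nat.find hr] w = g^[Nat.find hr] w := by
        apply iter_agree (fun w' hw' => pstep_not p g (fun hc => hw' (mem_pR_iff.mpr hc)))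
        intro i hi
        exact Nat.find_min hr hi
      obtain ⟨i, hi⟩ := mem_pR_iff.mp hds
      obtain ⟨d2, hd2⟩ := hreach_p i
      refine ⟨d2 + Nat.find hr, ?_⟩
      rw [Function.iterate_add_apply, hagree, ← hi] at *
      exact hd2
end Equivs

section Equivs2

variable {V : Type} [Fintype V] [DecidableEq V]

lemma iter_emb_inj {f : V → V} {v u : V} {h : ℕ} (hit : f^[h] v = u)
    (hmin : ∀ j < h, f^[j] v ≠ u) :
    Function.Injective (fun i : Fin (h+1) => f^[i.1] v) := by
  have aux : ∀ i j : Fin (h+1), i.1 < j.1 → f^[i.1] v ≠ f^[j.1] v := by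
    intro i j hij heq
    have hj : j.1 ≤ h := by omega
    have e1 : f^[(h - j.1) + j.1] v = u := by rw [Nat.sub_add_cancel hj]; exact hit
    rw [Function.iterate_add_apply, ← heq, ← Function.iterate_add_apply] at e1
    exact hmin (h - j.1 + i.1) (by omega) e1
  intro i j heq
  rcases lt_trichotomy i.1 j.1 with hlt | heqq | hgt
  · exact absurd heq (aux i j hlt)
  · exact Fin.ext heqq
  · exact absurd heq.symm (aux j i hgt)

def codeEmb {f : V → V} {v u : V} {h : ℕ} (hit : f^[h] v = u)
    (hmin : ∀ j < h, f^[j] v ≠ u) : Fin (h+1) ↪ V :=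
  ⟨fun i => f^[i.1] v, iter_emb_inj hit hmin⟩

def codeG (f : V → V) (R : Finset V) : V → V := fun w => if w ∈ R then w else f w

open scoped Classical in
lemma codeG_forest {f : V → V} {v u : V} {h : ℕ} (hf : IsTreeFn u f)
    (hit : f^[h] v = u) (hmin : ∀ j < h, f^[j] v ≠ u) :
    IsForestFn (Finset.univ.map (codeEmb hit hmin))
      (codeG f (Finset.univ.map (codeEmb hit hmin))) := by
  set R := Finset.univ.map (codeEmb hit hmin) with hR
  have huR : u ∈ R := by
    rw [hR]
    rw [Finset.mem_map]
    exact ⟨Fin.last h, Finset.mem_univ _, hit⟩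
  constructor
  · intro r hr
    rw [codeG, if_pos hr]
  · intro w
    have hex : ∃ d, f^[d] w ∈ R := by
      obtain ⟨d, hd⟩ := hf.2 w
      exact ⟨d, hd ▸ huR⟩
    refine ⟨Nat.find hex, ?_⟩
    have hagree : (codeG f R)^[Nat.find hex] w = f^[Nat.find hex] w := by
      apply iter_agree
      · intro w' hw'
        rw [codeG, if_neg hw']
      · intro i hi
        exact Nat.find_min hex hi
    rw [hagree]
    exact Nat.find_spec hex

noncomputable def equivE2 (h : ℕ) :
    MType V h ≃ Σ p : Fin (h+1) ↪ V, {g : V → V // IsForestFn (Finset.univ.map p) g} where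
  toFun t := ⟨codeEmb t.2.2.1 t.2.2.2,
    codeG t.1.2 (Finset.univ.map (codeEmb t.2.2.1 t.2.2.2)),
    codeG_forest t.2.1 t.2.2.1 t.2.2.2⟩
  invFun pg := ⟨((pg.1 (Fin.last h), pg.1 0), pstep pg.1 pg.2.1),
    pstep_isTreeFn pg.1 pg.2.1 pg.2.2, by
      have := pstep_iter_p pg.1 pg.2.1 0 h (by simp)
      simp only [Fin.val_zero, Nat.zero_add] at this
      rw [this]
      rfl, by
      intro j hj
      have := pstep_iter_p pg.1 pg.2.1 0 j (by simp; omega)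
      simp only [Fin.val_zero, Nat.zero_add] at this
      rw [this]
      intro hc
      have := pg.1.injective hc
      rw [Fin.ext_iff] at this
      simp only [Fin.val_last] at this
      omega⟩
  left_inv := by
    rintro ⟨⟨⟨u, v⟩, f⟩, hf, hit, hmin⟩
    apply Subtype.ext
    simp only
    have hpe : ∀ i : Fin (h+1), codeEmb hit hmin i = f^[i.1] v := fun i => rfl
    refine Prod.ext (Prod.ext ?_ ?_) ?_
    · exact hit
    · rfl
    · simp only
      funext w
      by_cases hw : ∃ i : Fin (h+1), codeEmb hit hmin i = w
      · obtain ⟨i, rfl⟩ := hw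
        rw [pstep_apply_p]
        by_cases hi : i.1 < h
        · rw [pnext, dif_pos hi]
          show f^[i.1 + 1] v = f (f^[i.1] v)
          exact iterate_succ_apply' f _ _
        · rw [pnext, dif_neg hi]
          show f^[i.1] v = f (f^[i.1] v)
          have hih : i.1 = h := by omega
          have h1 : f^[i.1] v = u := by rw [hih]; exact hit
          rw [h1]
          exact hf.1.symm
      · rw [pstep_not _ _ hw, codeG, if_neg (fun hc => hw (mem_pR_iff.mp hc))]
  right_inv := by
    rintro ⟨p, g, hg⟩
    have hit := pstep_iter_p p g 0 h (by simp)
    simp only [Fin.val_zero, Nat.zero_add] at hit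
    have hp : ∀ i : Fin (h+1), (pstep p g)^[i.1] (p 0) = p i := by
      intro i
      have := pstep_iter_p p g 0 i.1 (by simp; omega)
      simp only [Fin.val_zero, Nat.zero_add] at this
      rw [this]
    have hpemb : ∀ (hit' hmin'), (codeEmb (f := pstep p g) (v := p 0) (u := p (Fin.last h))
        (h := h) hit' hmin') = p := by
      intro hit' hmin'
      ext i
      exact hp i
    apply Sigma.ext
    · simp only
      exact hpemb _ _
    · simp only
      rw [Subtype.heq_iff_coe_eq]
      · funext w
        simp only [codeG]
        by_cases hw : w ∈ Finset.univ.map p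
        · rw [if_pos (by rw [hpemb]; exact hw), hg.1 w hw]
        · rw [if_neg (by rw [hpemb]; exact hw), pstep_not]
          intro hc
          exact hw (mem_pR_iff.mpr hc)
      · intro x
        rw [hpemb]

end Equivs2

section Final

lemma forestFn_card' {V : Type} [Fintype V] [DecidableEq V] (R : Finset V) (hR : R.Nonempty) :
    Nat.card {g : V → V // IsForestFn R g} * Fintype.card V
      = R.card * Fintype.card V ^ (Fintype.card V - R.card) :=
  forestFn_card _ V R hR rfl

lemma count_main (n h : ℕ) (hh1 : 1 ≤ h) :
    Nat.card {q : SimpleGraph (Fin n) × Fin n × Fin n //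
        q.1.IsTree ∧ q.2.1 ≠ q.2.2 ∧ q.1.dist q.2.1 q.2.2 = h} * n
      = n.descFactorial (h+1) * ((h+1) * n ^ (n - (h+1))) := by
  classical
  have e := (equivE1 (V := Fin n) h hh1).trans (equivE2 h)
  rw [Nat.card_congr e, nat_card_sigma']
  rw [Finset.sum_mul]
  have key : ∀ p : Fin (h+1) ↪ Fin n,
      Nat.card {g : Fin n → Fin n // IsForestFn (Finset.univ.map p) g} * n
        = (h+1) * n ^ (n - (h+1)) := by
    intro p
    have hcard : (Finset.univ.map p).card = h + 1 := by
      rw [Finset.card_map, Finset.card_univ, Fintype.card_fin]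
    have hne : (Finset.univ.map p).Nonempty :=
      ⟨p 0, Finset.mem_map.mpr ⟨0, Finset.mem_univ _, rfl⟩⟩
    have := forestFn_card' (Finset.univ.map p) hne
    rwa [hcard, Fintype.card_fin] at this
  rw [Finset.sum_congr rfl (fun p _ => key p), Finset.sum_const, Finset.card_univ,
    Fintype.card_embedding_eq, Fintype.card_fin, Fintype.card_fin, smul_eq_mul]

theorem stmt19' (n h : ℕ) (hh1 : 1 ≤ h) (hh2 : h ≤ n - 1) :
    (Nat.card {q : SimpleGraph (Fin n) × Fin n × Fin n //
        q.1.IsTree ∧ q.2.1 ≠ q.2.2 ∧ q.1.dist q.2.1 q.2.2 = h} : ℚ) /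
        ((n : ℚ) ^ (n - 2) * ((n : ℚ) * ((n : ℚ) - 1))) =
      (((h : ℚ) + 1) / ((n : ℚ) - 1)) *
        (∏ j ∈ Finset.range (h + 1), ((n : ℚ) - j)) / (n : ℚ) ^ (h + 1) := by
  have hn2 : 2 ≤ n := by omega
  have hhn : h + 1 ≤ n := by omega
  set C := Nat.card {q : SimpleGraph (Fin n) × Fin n × Fin n //
        q.1.IsTree ∧ q.2.1 ≠ q.2.2 ∧ q.1.dist q.2.1 q.2.2 = h} with hC
  set D := n.descFactorial (h+1) with hD
  have hcount := count_main n h hh1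
  rw [← hC, ← hD] at hcount
  set x : ℚ := (n : ℚ) with hx
  have F1 : x ≠ 0 := by
    rw [hx]
    exact Nat.cast_ne_zero.mpr (by omega)
  have Fx2 : (2 : ℚ) ≤ x := by rw [hx]; exact_mod_cast hn2
  have F2 : x - 1 ≠ 0 := by intro hc; linarith
  have hprod : (∏ j ∈ Finset.range (h + 1), ((n : ℚ) - j)) = (D : ℚ) := by
    rw [hD, Nat.descFactorial_eq_prod_range, Nat.cast_prod]
    apply Finset.prod_congr rfl
    intro j hj
    rw [Finset.mem_range] at hj
    rw [Nat.cast_sub (by omega)]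
  have F4 : (C : ℚ) * x = (D : ℚ) * ((h+1) * x ^ (n - h - 1)) := by
    rw [hx]
    have : n - (h+1) = n - h - 1 := by omega
    rw [this] at hcount
    exact_mod_cast congrArg (Nat.cast : ℕ → ℚ) hcount
  have e1 : x ^ (n - h - 1) = x ^ n / x ^ (h + 1) := by
    rw [eq_div_iff (pow_ne_zero _ F1), ← pow_add]
    congr 1
    omega
  have e2 : x ^ (n - 2) = x ^ n / (x * x) := by
    rw [eq_div_iff (by exact mul_ne_zero F1 F1)]
    have : x ^ (n-2) * (x * x) = x ^ (n - 2 + 2) := by rw [pow_add]; ring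
    rw [this]
    congr 1
    omega
  rw [e1] at F4
  rw [hprod, e2]
  have Fn : x ^ n ≠ 0 := pow_ne_zero _ F1
  have Fh : x ^ (h+1) ≠ 0 := pow_ne_zero _ F1
  field_simp
  field_simp at F4
  linear_combination F4
end Final

/-- Moon's formula: in a uniform labeled tree on `n` vertices, the distance between
two uniformly chosen distinct vertices equals `h` with probability
`((h+1)/(n-1)) · n(n-1)⋯(n-h)/n^(h+1)`, for `1 ≤ h ≤ n-1`.  The probability is the
number of triples (tree, ordered pair of distinct vertices at distance `h`) divided
by `n^(n-2) · n(n-1)`. -/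
theorem stmt19 (n h : ℕ) (hh1 : 1 ≤ h) (hh2 : h ≤ n - 1) :
    (Nat.card {q : SimpleGraph (Fin n) × Fin n × Fin n //
        q.1.IsTree ∧ q.2.1 ≠ q.2.2 ∧ q.1.dist q.2.1 q.2.2 = h} : ℚ) /
        ((n : ℚ) ^ (n - 2) * ((n : ℚ) * ((n : ℚ) - 1))) =
      (((h : ℚ) + 1) / ((n : ℚ) - 1)) *
        (∏ j ∈ Finset.range (h + 1), ((n : ℚ) - j)) / (n : ℚ) ^ (h + 1) := by
  exact stmt19' n h hh1 hh2
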